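/- Suppose the initial data satisfies ρ⁰ᵢ ≥ 0 for every i ∈ ℕ. Then the discrete mass-balance identity holds for every n ≥ 0: s^{n+1} + Δa²·Σ_{i∈ℕ} ζ^{n+1}ᵢ·ρ^{n+1}ᵢ = sⁿ + Δa·β^{n+1}·(1 − s^{n+1}). -/

import Mathlib

/-- Discrete mass-balance identity (equation `eq.s` of the paper):
for every `n ≥ 0`,
`s^{n+1} + Δa² Σᵢ ζ^{n+1}ᵢ ρ^{n+1}ᵢ = sⁿ + Δa β^{n+1} (1 − s^{n+1})`. -/
theorem stmt2
    (Δa ε ζmin ζmax βmin βmax : ℝ)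
    (hΔa : 0 < Δa) (hε : 0 < ε)
    (ζ : ℕ → ℕ → ℝ) (β : ℕ → ℝ)
    (hζmin : 0 < ζmin)
    (hζ : ∀ n i, ζmin ≤ ζ n i ∧ ζ n i ≤ ζmax)
    (hβmin : 0 < βmin)
    (hβ : ∀ n, βmin ≤ β n ∧ β n ≤ βmax)
    (ρ : ℕ → ℕ → ℝ)
    (hsum : Summable (ρ 0))
    (hrec : ∀ n i, ρ (n+1) (i+1) = ρ n i / (1 + Δa * ζ (n+1) (i+1)))
    (hbdry : ∀ n, ρ (n+1) 0 =
      β (n+1) / (1 + Δa * (β (n+1) + ζ (n+1) 0)) * (1 - Δa * ∑' i, ρ (n+1) (i+1)))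
    (s : ℕ → ℝ) (hs : ∀ n, s n = Δa * ∑' i, ρ n i)
    (hinit_pos : ∀ i, 0 ≤ ρ 0 i) :
    ∀ n, s (n+1) + Δa ^ 2 * ∑' i, ζ (n+1) i * ρ (n+1) i
      = s n + Δa * β (n+1) * (1 - s (n+1)) := by
  have hden : ∀ n i, (0:ℝ) < 1 + Δa * ζ n i := by
    intro n i
    have h1 := (hζ n i).1
    nlinarith
  have hden1 : ∀ n i, (1:ℝ) ≤ 1 + Δa * ζ n i := by
    intro n i
    have h1 := (hζ n i).1
    nlinarith
  have hsumn : ∀ n, Summable (ρ n) := by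
    intro n
    induction n with
    | zero => exact hsum
    | succ n ih =>
      have h1 : Summable (fun i => ρ (n+1) (i+1)) := by
        apply Summable.of_norm_bounded ih.abs
        intro i
        rw [hrec n i, Real.norm_eq_abs, abs_div, abs_of_pos (hden (n+1) (i+1))]
        exact div_le_self (abs_nonneg _) (hden1 (n+1) (i+1))
      exact (summable_nat_add_iff 1).1 h1
  intro n
  have hρsucc := hsumn (n+1)
  have h1 : Summable (fun i => ρ (n+1) (i+1)) := (summable_nat_add_iff 1).2 hρsucc
  have hζρ : Summable (fun i => ζ (n+1) i * ρ (n+1) i) := by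
    apply Summable.of_norm_bounded (hρsucc.abs.mul_left ζmax)
    intro i
    rw [Real.norm_eq_abs, abs_mul]
    apply mul_le_mul_of_nonneg_right _ (abs_nonneg _)
    rw [abs_of_pos (lt_of_lt_of_le hζmin (hζ (n+1) i).1)]
    exact (hζ (n+1) i).2
  have h2 : Summable (fun i => ζ (n+1) (i+1) * ρ (n+1) (i+1)) :=
    (summable_nat_add_iff 1).2 hζρ
  have hkey : ∀ i, ρ (n+1) (i+1) + Δa * (ζ (n+1) (i+1) * ρ (n+1) (i+1)) = ρ n i := by
    intro i
    have hd := (hden (n+1) (i+1)).ne'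
    rw [hrec n i]
    field_simp
  have hsum1 : (∑' i, ρ (n+1) (i+1)) + Δa * ∑' i, ζ (n+1) (i+1) * ρ (n+1) (i+1)
      = ∑' i, ρ n i := by
    rw [← tsum_mul_left, ← Summable.tsum_add h1 (h2.mul_left Δa)]
    exact tsum_congr hkey
  have hsplit : ∑' i, ρ (n+1) i = ρ (n+1) 0 + ∑' i, ρ (n+1) (i+1) :=
    Summable.tsum_eq_zero_add hρsucc
  have hsplitζ : ∑' i, ζ (n+1) i * ρ (n+1) i
      = ζ (n+1) 0 * ρ (n+1) 0 + ∑' i, ζ (n+1) (i+1) * ρ (n+1) (i+1) :=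
    Summable.tsum_eq_zero_add hζρ
  have hD : (0:ℝ) < 1 + Δa * (β (n+1) + ζ (n+1) 0) := by
    have h1 := (hβ (n+1)).1
    have h2 := (hζ (n+1) 0).1
    nlinarith
  have h0' : ρ (n+1) 0 * (1 + Δa * (β (n+1) + ζ (n+1) 0))
      = β (n+1) * (1 - Δa * ∑' i, ρ (n+1) (i+1)) := by
    rw [hbdry n]
    field_simp
  have hb : ρ (n+1) 0 + Δa * (ζ (n+1) 0 * ρ (n+1) 0) = β (n+1) * (1 - s (n+1)) := by
    have hsval : s (n+1) = Δa * (ρ (n+1) 0 + ∑' i, ρ (n+1) (i+1)) := by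
      rw [hs (n+1), hsplit]
    rw [hsval]
    linear_combination h0'
  linear_combination hs (n+1) + Δa * hsplit + Δa^2 * hsplitζ - hs n + Δa * hsum1 + Δa * hb
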